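/- Let P₁, P₂, Q be orthogonal projections on a complex Hilbert space H. Then ran Q is contained in the range of the Sasaki arrow P₁ ⇒ P₂ := P₁^⊥ ∨ (P₁ ∧ P₂) if and only if the closure of the range of the operator P₁Q is contained in ran P₂. -/

import Mathlib

variable {H : Type} [NormedAddCommGroup H] [InnerProductSpace ℂ H] [CompleteSpace H]

/-- `P` is an orthogonal projection on `H`: self-adjoint and idempotent. -/
def IsOrthProj (P : H →L[ℂ] H) : Prop := IsSelfAdjoint P ∧ P * P = P

lemma mem_range_iff_fix (P : H →L[ℂ] H) (hP : P * P = P) (x : H) :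
    x ∈ LinearMap.range (P : H →ₗ[ℂ] H) ↔ P x = x := by
  constructor
  · rintro ⟨y, rfl⟩
    have := congrArg (fun T : H →L[ℂ] H => T y) hP
    simpa using this
  · intro h; exact ⟨x, h⟩

lemma range_closed (P : H →L[ℂ] H) (hP : P * P = P) :
    IsClosed ((LinearMap.range (P : H →ₗ[ℂ] H) : Submodule ℂ H) : Set H) := by
  have : ((LinearMap.range (P : H →ₗ[ℂ] H) : Submodule ℂ H) : Set H) = {x | P x = x} := by
    ext x; simpa using mem_range_iff_fix P hP x
  rw [this]
  exact isClosed_eq P.continuous continuous_id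

/-- `ran Q` is contained in the range of the Sasaki arrow
`P₁ ⇒ P₂ = P₁^⊥ ∨ (P₁ ∧ P₂)` (the closed linear span of `ran (1 - P₁) ∪ (ran P₁ ∩ ran P₂)`)
if and only if the closure of the range of `P₁Q` is contained in `ran P₂`. -/
theorem stmt5 (P₁ P₂ Q : H →L[ℂ] H) (h1 : IsOrthProj P₁) (h2 : IsOrthProj P₂)
    (hQ : IsOrthProj Q) :
    LinearMap.range (Q : H →ₗ[ℂ] H) ≤
        (LinearMap.range ((1 - P₁ : H →L[ℂ] H) : H →ₗ[ℂ] H) ⊔ (LinearMap.range (P₁ : H →ₗ[ℂ] H) ⊓ LinearMap.range (P₂ : H →ₗ[ℂ] H))).topologicalClosure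
      ↔ (LinearMap.range ((P₁ * Q : H →L[ℂ] H) : H →ₗ[ℂ] H)).topologicalClosure ≤ LinearMap.range (P₂ : H →ₗ[ℂ] H) := by
  obtain ⟨_, h1i⟩ := h1
  obtain ⟨_, h2i⟩ := h2
  have hcl2 := range_closed P₂ h2i
  have hP1z : P₁ * (1 - P₁) = 0 := by
    rw [mul_sub, mul_one, h1i, sub_self]
  constructor
  · intro h
    have key : (LinearMap.range ((1 - P₁ : H →L[ℂ] H) : H →ₗ[ℂ] H) ⊔
          (LinearMap.range (P₁ : H →ₗ[ℂ] H) ⊓ LinearMap.range (P₂ : H →ₗ[ℂ] H))).topologicalClosure ≤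
        Submodule.comap (P₁ : H →ₗ[ℂ] H) (LinearMap.range (P₂ : H →ₗ[ℂ] H)) := by
      apply Submodule.topologicalClosure_minimal
      · apply sup_le
        · rintro x ⟨y, rfl⟩
          simp only [Submodule.mem_comap]
          have : P₁ ((1 - P₁) y) = 0 := by
            have := congrArg (fun T : H →L[ℂ] H => T y) hP1z
            simpa using this
          simp only [ContinuousLinearMap.coe_coe, this]
          exact Submodule.zero_mem _
        · rintro x ⟨hx1, hx2⟩
          simp only [Submodule.mem_comap, ContinuousLinearMap.coe_coe]
          rw [(mem_range_iff_fix P₁ h1i x).mp hx1]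
          exact hx2
      · have : ((Submodule.comap (P₁ : H →ₗ[ℂ] H) (LinearMap.range (P₂ : H →ₗ[ℂ] H))) : Set H) =
            P₁ ⁻¹' (LinearMap.range (P₂ : H →ₗ[ℂ] H) : Submodule ℂ H) := rfl
        rw [this]
        exact hcl2.preimage P₁.continuous
    refine Submodule.topologicalClosure_minimal _ ?_ hcl2
    rintro x ⟨y, rfl⟩
    have : Q y ∈ LinearMap.range (Q : H →ₗ[ℂ] H) := ⟨y, rfl⟩
    have := key (h this)
    simpa using this
  · intro h
    have hsub : LinearMap.range ((P₁ * Q : H →L[ℂ] H) : H →ₗ[ℂ] H) ≤ LinearMap.range (P₂ : H →ₗ[ℂ] H) :=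
      le_trans (Submodule.le_topologicalClosure _) h
    intro x hx
    obtain ⟨y, rfl⟩ := hx
    apply Submodule.le_topologicalClosure
    have hdecomp : Q y = (1 - P₁) (Q y) + P₁ (Q y) := by
      simp
    rw [ContinuousLinearMap.coe_coe, hdecomp]
    apply Submodule.add_mem
    · exact Submodule.mem_sup_left ⟨Q y, rfl⟩
    · apply Submodule.mem_sup_right
      refine ⟨⟨Q y, rfl⟩, ?_⟩
      exact hsub ⟨y, rfl⟩
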